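/- Let W be a 2×m real matrix whose columns form a basis of Ker((I − A^N)ᵀ), and set Ψ(t) = (A^{−t})ᵀ(A^N)ᵀ W for t ∈ ℕ. Then the m×m Gram matrix G = Σ_{j=0}^{N−1} Ψ(j)ᵀΨ(j) is invertible, the map Q : X_N → X_N defined by (Qh)(t) = Ψ(t)·G^{−1}·Σ_{i=0}^{N−1} Ψ(i)ᵀ h(i) is well defined (Qh is N-periodic), linear, satisfies Q ∘ Q = Q, and the kernel of Q equals the range of 𝓛. -/

import Mathlib

open Matrix

lemma range_of_orth {n : ℕ} (M : Matrix (Fin n) (Fin n) ℝ) (v : Fin n → ℝ)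
    (hv : ∀ w : Fin n → ℝ, Mᵀ *ᵥ w = 0 → w ⬝ᵥ v = 0) :
    ∃ u : Fin n → ℝ, M *ᵥ u = v := by
  set T : EuclideanSpace ℝ (Fin n) →ₗ[ℝ] EuclideanSpace ℝ (Fin n) := Matrix.toEuclideanLin M
  have hadj : LinearMap.adjoint T = Matrix.toEuclideanLin Mᵀ := by
    rw [← Matrix.toEuclideanLin_conjTranspose_eq_adjoint]
    congr 1
  have h1 : (LinearMap.range T)ᗮ = LinearMap.ker (LinearMap.adjoint T) := by
    ext w
    simp only [Submodule.mem_orthogonal, LinearMap.mem_ker]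
    constructor
    · intro hw
      have := hw (T (LinearMap.adjoint T w)) ⟨_, rfl⟩
      rw [real_inner_comm, ← LinearMap.adjoint_inner_left] at this
      exact inner_self_eq_zero.mp this
    · rintro hw u ⟨x, rfl⟩
      rw [real_inner_comm, ← LinearMap.adjoint_inner_left, hw]
      simp
  have h2 : LinearMap.range T = (LinearMap.ker (LinearMap.adjoint T))ᗮ := by
    rw [← h1, Submodule.orthogonal_orthogonal]
  have hvmem : (WithLp.toLp 2 v : EuclideanSpace ℝ (Fin n)) ∈ (LinearMap.ker (LinearMap.adjoint T))ᗮ := by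
    intro w hw
    rw [LinearMap.mem_ker, hadj] at hw
    have hw' : Mᵀ *ᵥ w.ofLp = 0 := by
      have := congrArg (WithLp.equiv 2 (Fin n → ℝ)) hw
      simpa [Matrix.ofLp_toEuclideanLin_apply] using this
    have := hv w.ofLp hw'
    simpa [PiLp.inner_apply, RCLike.inner_apply, dotProduct, mul_comm] using this
  rw [← h2] at hvmem
  obtain ⟨u, hu⟩ := hvmem
  refine ⟨u, ?_⟩
  have := congrArg (WithLp.equiv 2 (Fin n → ℝ)) hu
  simpa [Matrix.ofLp_toEuclideanLin_apply, T] using this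

lemma sum_mulVec' {m k : ℕ} (s : Finset ℕ) (M : ℕ → Matrix (Fin m) (Fin k) ℝ) (v : Fin k → ℝ) :
    (∑ j ∈ s, M j) *ᵥ v = ∑ j ∈ s, M j *ᵥ v := by
  ext i
  simp [Matrix.mulVec, dotProduct, Finset.sum_apply, Matrix.sum_apply, Finset.sum_mul]
  rw [Finset.sum_comm]

lemma mulVec_sum' {m k : ℕ} (s : Finset ℕ) (M : Matrix (Fin m) (Fin k) ℝ) (v : ℕ → Fin k → ℝ) :
    M *ᵥ (∑ j ∈ s, v j) = ∑ j ∈ s, M *ᵥ v j := by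
  ext i
  simp [Matrix.mulVec, dotProduct, Finset.sum_apply, Finset.mul_sum]
  rw [Finset.sum_comm]

lemma col_mul' {p q r : ℕ} (M : Matrix (Fin p) (Fin q) ℝ) (Nn : Matrix (Fin q) (Fin r) ℝ)
    (j : Fin r) : (M * Nn)ᵀ j = M *ᵥ Nnᵀ j := by
  funext i
  simp [Matrix.mul_apply, Matrix.mulVec, dotProduct]

lemma mulVec_eq_sum_col {p q : ℕ} (W : Matrix (Fin p) (Fin q) ℝ) (e : Fin q → ℝ) :
    W *ᵥ e = ∑ j, e j • Wᵀ j := by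
  funext i
  simp [Matrix.mulVec, dotProduct, Finset.sum_apply, mul_comm]

lemma dot_shift {p q : ℕ} (W : Matrix (Fin p) (Fin q) ℝ) (e : Fin q → ℝ) (z : Fin p → ℝ) :
    (W *ᵥ e) ⬝ᵥ z = e ⬝ᵥ (Wᵀ *ᵥ z) := by
  rw [dotProduct_comm, dotProduct_mulVec, ← Matrix.mulVec_transpose, dotProduct_comm]

lemma dotProduct_sum' {k : ℕ} (s : Finset ℕ) (v : Fin k → ℝ) (f : ℕ → Fin k → ℝ) :
    v ⬝ᵥ (∑ i ∈ s, f i) = ∑ i ∈ s, v ⬝ᵥ f i := by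
  simp [dotProduct, Finset.sum_apply, Finset.mul_sum]
  rw [Finset.sum_comm]

theorem Q_is_projection_with_ker_range_L
    (N : ℕ) (hN : 1 < N) (b c : ℝ) (hc : c ≠ 0)
    (A : Matrix (Fin 2) (Fin 2) ℝ) (hA : A = !![0, 1; -c, -b])
    (m : ℕ) (W : Matrix (Fin 2) (Fin m) ℝ)
    (hWli : LinearIndependent ℝ (fun j : Fin m => Wᵀ j))
    (hWspan : Submodule.span ℝ (Set.range fun j : Fin m => Wᵀ j) =
      LinearMap.ker (((1 - A ^ N)ᵀ).mulVecLin))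
    (Ψ : ℕ → Matrix (Fin 2) (Fin m) ℝ)
    (hΨ : ∀ t : ℕ, Ψ t = ((A⁻¹) ^ t)ᵀ * (A ^ N)ᵀ * W)
    (G : Matrix (Fin m) (Fin m) ℝ)
    (hG : G = ∑ j ∈ Finset.range N, (Ψ j)ᵀ * Ψ j)
    (Q : (ℕ → Fin 2 → ℝ) → (ℕ → Fin 2 → ℝ))
    (hQ : ∀ h : ℕ → Fin 2 → ℝ,
      Q h = fun t => Ψ t *ᵥ (G⁻¹ *ᵥ ∑ i ∈ Finset.range N, (Ψ i)ᵀ *ᵥ h i)) :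
    IsUnit G ∧
    (∀ h : ℕ → Fin 2 → ℝ, (∀ t : ℕ, h (t + N) = h t) →
        ∀ t : ℕ, Q h (t + N) = Q h t) ∧
    (∀ h k : ℕ → Fin 2 → ℝ, Q (h + k) = Q h + Q k) ∧
    (∀ (a : ℝ) (h : ℕ → Fin 2 → ℝ), Q (a • h) = a • Q h) ∧
    (∀ h : ℕ → Fin 2 → ℝ, Q (Q h) = Q h) ∧
    (∀ h : ℕ → Fin 2 → ℝ, (∀ t : ℕ, h (t + N) = h t) →
      (Q h = 0 ↔ ∃ x : ℕ → Fin 2 → ℝ, (∀ t : ℕ, x (t + N) = x t) ∧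
        ∀ t : ℕ, x (t + 1) - A *ᵥ x t = h t)) := by
  -- basic invertibility of A
  have hdet : A.det = c := by rw [hA]; simp [Matrix.det_fin_two_of]
  have hdetu : IsUnit A.det := by rw [hdet]; exact isUnit_iff_ne_zero.mpr hc
  have hAiA : A⁻¹ * A = 1 := Matrix.nonsing_inv_mul A hdetu
  have hAAi : A * A⁻¹ = 1 := Matrix.mul_nonsing_inv A hdetu
  have hcomm : Commute A⁻¹ A := by
    unfold Commute SemiconjBy; rw [hAiA, hAAi]
  have hpowinv : ∀ n : ℕ, A ^ n * A⁻¹ ^ n = 1 := by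
    intro n
    rw [← hcomm.symm.mul_pow, hAAi, one_pow]
  have hinvpow : ∀ n : ℕ, A⁻¹ ^ n * A ^ n = 1 := by
    intro n
    rw [← hcomm.mul_pow, hAiA, one_pow]
  -- columns of W are fixed by (A^N)ᵀ
  have hker : ∀ w : Fin 2 → ℝ, (1 - A ^ N)ᵀ *ᵥ w = 0 ↔ w - (A ^ N)ᵀ *ᵥ w = 0 := by
    intro w
    rw [Matrix.transpose_sub, Matrix.transpose_one, Matrix.sub_mulVec, Matrix.one_mulVec]
  have hWcol : ∀ j : Fin m, (A ^ N)ᵀ *ᵥ Wᵀ j = Wᵀ j := by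
    intro j
    have hmem : Wᵀ j ∈ LinearMap.ker (((1 - A ^ N)ᵀ).mulVecLin) := by
      rw [← hWspan]; exact Submodule.subset_span ⟨j, rfl⟩
    rw [LinearMap.mem_ker, Matrix.mulVecLin_apply, hker] at hmem
    linear_combination (norm := module) -hmem
  have hANW : (A ^ N)ᵀ * W = W := by
    have hcols : ∀ j, ((A ^ N)ᵀ * W)ᵀ j = Wᵀ j := by
      intro j
      rw [col_mul', hWcol]
    ext i j
    have h2 := congrFun (hcols j) i
    simpa [Matrix.transpose_apply] using h2
  -- simplified form of Ψ
  have hΨW : ∀ t : ℕ, Ψ t = ((A⁻¹) ^ t)ᵀ * W := by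
    intro t
    rw [hΨ, Matrix.mul_assoc, hANW]
  have hΨT : ∀ t : ℕ, (Ψ t)ᵀ = Wᵀ * (A⁻¹) ^ t := by
    intro t
    rw [hΨW, Matrix.transpose_mul, Matrix.transpose_transpose]
  have hΨ0 : Ψ 0 = W := by rw [hΨW]; simp
  have hinvNW : ((A⁻¹) ^ N)ᵀ * W = W := by
    conv_lhs => rw [← hANW, ← Matrix.mul_assoc, ← Matrix.transpose_mul, hpowinv N]
    simp
  have hΨper : ∀ t : ℕ, Ψ (t + N) = Ψ t := by
    intro t
    rw [hΨW, hΨW, add_comm, pow_add, Matrix.transpose_mul, Matrix.mul_assoc, hinvNW]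
  -- telescoping identity
  have hkey : ∀ t : ℕ, (Ψ (t + 1))ᵀ * A = (Ψ t)ᵀ := by
    intro t
    rw [hΨT, hΨT, pow_succ, Matrix.mul_assoc, Matrix.mul_assoc, hAiA, Matrix.mul_one]
  -- injectivity of W on vectors
  have hWinj : ∀ v : Fin m → ℝ, W *ᵥ v = 0 → v = 0 := by
    intro v hv
    have hsum : ∑ j : Fin m, v j • Wᵀ j = 0 := by
      funext i
      have := congrFun hv i
      simpa [Matrix.mulVec, dotProduct, Finset.sum_apply, Matrix.transpose_apply,
        mul_comm] using this
    have := Fintype.linearIndependent_iff.mp hWli v hsum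
    funext j; exact this j
  -- G is a unit
  have hGunit : IsUnit G := by
    rw [← Matrix.mulVec_injective_iff_isUnit]
    have hzero : ∀ v : Fin m → ℝ, G *ᵥ v = 0 → v = 0 := by
      intro v hv
      have hquad : ∑ j ∈ Finset.range N, (Ψ j *ᵥ v) ⬝ᵥ (Ψ j *ᵥ v) = 0 := by
        have h0 : v ⬝ᵥ (G *ᵥ v) = 0 := by rw [hv]; simp
        rw [hG, sum_mulVec'] at h0
        rw [← h0, dotProduct_sum']
        refine Finset.sum_congr rfl fun j _ => ?_
        rw [← Matrix.mulVec_mulVec, dotProduct_mulVec v, vecMul_transpose]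
      have hterm : ∀ j ∈ Finset.range N, (Ψ j *ᵥ v) ⬝ᵥ (Ψ j *ᵥ v) = 0 := by
        have := (Finset.sum_eq_zero_iff_of_nonneg
          (fun j _ => Finset.sum_nonneg fun k _ => mul_self_nonneg _)).mp hquad
        exact this
      have h0 : Ψ 0 *ᵥ v = 0 :=
        dotProduct_self_eq_zero.mp (hterm 0 (Finset.mem_range.mpr (by omega)))
      rw [hΨ0] at h0
      exact hWinj v h0
    intro v w hvw
    have hsub : G *ᵥ (v - w) = 0 := by rw [Matrix.mulVec_sub, hvw, sub_self]
    exact sub_eq_zero.mp (hzero _ hsub)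
  have hdetG : IsUnit G.det := (Matrix.isUnit_iff_isUnit_det G).mp hGunit
  have hGiG : G⁻¹ * G = 1 := Matrix.nonsing_inv_mul G hdetG
  have hGGi : G * G⁻¹ = 1 := Matrix.mul_nonsing_inv G hdetG
  refine ⟨hGunit, ?_, ?_, ?_, ?_, ?_⟩
  · -- periodicity
    intro h _ t
    rw [hQ]
    simp only [hΨper t]
  · -- additivity
    intro h k
    rw [hQ, hQ, hQ]
    funext t
    have hsplit : ∑ i ∈ Finset.range N, (Ψ i)ᵀ *ᵥ (h + k) i
        = (∑ i ∈ Finset.range N, (Ψ i)ᵀ *ᵥ h i) + ∑ i ∈ Finset.range N, (Ψ i)ᵀ *ᵥ k i := by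
      rw [← Finset.sum_add_distrib]
      exact Finset.sum_congr rfl fun i _ => by simp [Matrix.mulVec_add]
    rw [hsplit, Matrix.mulVec_add, Matrix.mulVec_add]
    simp only [Pi.add_apply]
  · -- scalar
    intro a h
    rw [hQ, hQ]
    funext t
    have hsplit : ∑ i ∈ Finset.range N, (Ψ i)ᵀ *ᵥ (a • h) i
        = a • ∑ i ∈ Finset.range N, (Ψ i)ᵀ *ᵥ h i := by
      rw [Finset.smul_sum]
      exact Finset.sum_congr rfl fun i _ => by simp [Matrix.mulVec_smul]
    rw [hsplit, Matrix.mulVec_smul, Matrix.mulVec_smul]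
    simp only [Pi.smul_apply]
  · -- idempotent
    intro h
    rw [hQ (Q h), hQ h]
    funext t
    set S : Fin m → ℝ := ∑ i ∈ Finset.range N, (Ψ i)ᵀ *ᵥ h i with hS
    have : (∑ i ∈ Finset.range N, (Ψ i)ᵀ *ᵥ (Ψ i *ᵥ (G⁻¹ *ᵥ S))) = G *ᵥ (G⁻¹ *ᵥ S) := by
      rw [hG, sum_mulVec']
      refine Finset.sum_congr rfl fun j _ => ?_
      rw [Matrix.mulVec_mulVec]
    rw [this, Matrix.mulVec_mulVec, Matrix.mulVec_mulVec, Matrix.mul_assoc,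
      hGiG, Matrix.mul_one]
  · -- kernel characterization
    intro h hper
    set S : Fin m → ℝ := ∑ i ∈ Finset.range N, (Ψ i)ᵀ *ᵥ h i with hS
    have hQ0 : Q h = 0 ↔ S = 0 := by
      constructor
      · intro hq
        have h0 : Ψ 0 *ᵥ (G⁻¹ *ᵥ S) = 0 := by
          have h1 : Q h 0 = Ψ 0 *ᵥ (G⁻¹ *ᵥ S) := by rw [hQ]
          rw [hq] at h1
          simpa using h1.symm
        rw [hΨ0] at h0
        have h1 : G⁻¹ *ᵥ S = 0 := hWinj _ h0
        have : G *ᵥ (G⁻¹ *ᵥ S) = 0 := by rw [h1]; simp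
        rwa [Matrix.mulVec_mulVec, hGGi, Matrix.one_mulVec] at this
      · intro hS0
        rw [hQ]
        funext t
        rw [← hS, hS0]
        simp
    rw [hQ0]
    constructor
    · -- S = 0 → existence of periodic solution
      intro hS0
      -- the vector that must lie in the range of 1 - A^N
      set v : Fin 2 → ℝ := ∑ s ∈ Finset.range N, (A ^ N * (A⁻¹) ^ (s + 1)) *ᵥ h s with hv
      -- (A⁻¹)ᵀ maps the kernel to itself : get D with (A⁻¹)ᵀ * W = W * D
      have hinvK : ∀ j : Fin m, ∃ d : Fin m → ℝ, (A⁻¹)ᵀ *ᵥ Wᵀ j = W *ᵥ d := by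
        intro j
        have hmem : (A⁻¹)ᵀ *ᵥ Wᵀ j ∈ LinearMap.ker (((1 - A ^ N)ᵀ).mulVecLin) := by
          rw [LinearMap.mem_ker, Matrix.mulVecLin_apply, Matrix.mulVec_mulVec,
            ← Matrix.transpose_mul]
          have hc1 : A⁻¹ * (1 - A ^ N) = (1 - A ^ N) * A⁻¹ := by
            rw [Matrix.mul_sub, Matrix.sub_mul, Matrix.mul_one, Matrix.one_mul,
              (hcomm.pow_right N).symm.eq]
          rw [hc1, Matrix.transpose_mul, ← Matrix.mulVec_mulVec]
          have : (1 - A ^ N)ᵀ *ᵥ Wᵀ j = 0 := by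
            have hmem' : Wᵀ j ∈ LinearMap.ker (((1 - A ^ N)ᵀ).mulVecLin) := by
              rw [← hWspan]; exact Submodule.subset_span ⟨j, rfl⟩
            rw [LinearMap.mem_ker, Matrix.mulVecLin_apply] at hmem'
            exact hmem'
          rw [this]
          simp
        rw [← hWspan, Submodule.mem_span_range_iff_exists_fun ℝ] at hmem
        obtain ⟨d, hd⟩ := hmem
        refine ⟨d, ?_⟩
        rw [← hd]
        funext i
        simp [Matrix.mulVec, dotProduct, Finset.sum_apply, Matrix.transpose_apply, mul_comm]
      choose d hd using hinvK
      set D : Matrix (Fin m) (Fin m) ℝ := Matrix.of (fun i j => d j i) with hD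
      have hWD : (A⁻¹)ᵀ * W = W * D := by
        ext i j
        have := congrFun (hd j) i
        simpa [Matrix.mul_apply, Matrix.mulVec, dotProduct, Matrix.transpose_apply,
          hD] using this
      have hWtAi : Wᵀ * A⁻¹ = Dᵀ * Wᵀ := by
        have := congrArg Matrix.transpose hWD
        rwa [Matrix.transpose_mul, Matrix.transpose_mul, Matrix.transpose_transpose] at this
      -- orthogonality of v to the kernel
      have horth : ∀ w : Fin 2 → ℝ, (1 - A ^ N)ᵀ *ᵥ w = 0 → w ⬝ᵥ v = 0 := by
        intro w hw
        have hmem : w ∈ LinearMap.ker (((1 - A ^ N)ᵀ).mulVecLin) := by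
          rw [LinearMap.mem_ker, Matrix.mulVecLin_apply]; exact hw
        rw [← hWspan, Submodule.mem_span_range_iff_exists_fun ℝ] at hmem
        obtain ⟨e, he⟩ := hmem
        have hwW : w = W *ᵥ e := by
          rw [← he]
          funext i
          simp [Matrix.mulVec, dotProduct, Finset.sum_apply, Matrix.transpose_apply, mul_comm]
        -- compute w ⬝ᵥ v
        have hterm : ∀ s : ℕ, Wᵀ * (A ^ N * (A⁻¹) ^ (s + 1)) = Dᵀ * (Wᵀ * (A⁻¹) ^ s) := by
          intro s
          have h1 : Wᵀ * A ^ N = Wᵀ := by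
            have := congrArg Matrix.transpose hANW
            rwa [Matrix.transpose_mul, Matrix.transpose_transpose] at this
          rw [← Matrix.mul_assoc, h1, pow_succ', ← Matrix.mul_assoc, hWtAi,
            Matrix.mul_assoc]
        calc w ⬝ᵥ v
            = ∑ s ∈ Finset.range N, w ⬝ᵥ ((A ^ N * A⁻¹ ^ (s + 1)) *ᵥ h s) := by
              rw [hv, dotProduct_sum']
          _ = ∑ s ∈ Finset.range N, e ⬝ᵥ (Dᵀ *ᵥ ((Ψ s)ᵀ *ᵥ h s)) := by
              refine Finset.sum_congr rfl fun s _ => ?_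
              rw [hwW, dot_shift, Matrix.mulVec_mulVec, hterm s, ← Matrix.mulVec_mulVec,
                ← hΨT]
          _ = e ⬝ᵥ (Dᵀ *ᵥ S) := by rw [hS, mulVec_sum', dotProduct_sum']
          _ = 0 := by rw [hS0]; simp
      -- solve the linear system for the initial value
      obtain ⟨x₀, hx₀⟩ := range_of_orth (1 - A ^ N) v horth
      -- define the solution
      set x : ℕ → Fin 2 → ℝ :=
        fun t => A ^ t *ᵥ x₀ + ∑ s ∈ Finset.range t, (A ^ t * A⁻¹ ^ (s + 1)) *ᵥ h s with hxdef
      have hrec : ∀ t : ℕ, x (t + 1) - A *ᵥ x t = h t := by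
        intro t
        have hAx : A *ᵥ x t
            = A ^ (t + 1) *ᵥ x₀ + ∑ s ∈ Finset.range t, (A ^ (t + 1) * A⁻¹ ^ (s + 1)) *ᵥ h s := by
          simp only [hxdef]
          rw [Matrix.mulVec_add, Matrix.mulVec_mulVec, ← pow_succ', mulVec_sum']
          congr 1
          refine Finset.sum_congr rfl fun s _ => ?_
          rw [Matrix.mulVec_mulVec, ← Matrix.mul_assoc, ← pow_succ']
        have hx1 : x (t + 1)
            = A ^ (t + 1) *ᵥ x₀ + (∑ s ∈ Finset.range t, (A ^ (t + 1) * A⁻¹ ^ (s + 1)) *ᵥ h s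
              + (A ^ (t + 1) * A⁻¹ ^ (t + 1)) *ᵥ h t) := by
          simp only [hxdef]
          rw [Finset.sum_range_succ]
        rw [hx1, hAx, hpowinv (t + 1), Matrix.one_mulVec]
        abel
      have hx00 : x 0 = x₀ := by simp only [hxdef]; simp
      have hxN : x N = x 0 := by
        have h1 : x N = A ^ N *ᵥ x₀ + v := by simp only [hxdef, hv]
        have h2 : x₀ - A ^ N *ᵥ x₀ = v := by
          rw [← hx₀, Matrix.sub_mulVec, Matrix.one_mulVec]
        rw [h1, hx00, ← h2]
        abel
      have hxper : ∀ t : ℕ, x (t + N) = x t := by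
        intro t
        induction t with
        | zero => simpa using hxN
        | succ t ih =>
          have h1 := hrec (t + N)
          have h2 := hrec t
          calc x (t + 1 + N) = x (t + N + 1) := by rw [Nat.add_right_comm]
            _ = h (t + N) + A *ᵥ x (t + N) := sub_eq_iff_eq_add.mp h1
            _ = h t + A *ᵥ x t := by rw [ih, hper t]
            _ = x (t + 1) := (sub_eq_iff_eq_add.mp h2).symm
      exact ⟨x, hxper, hrec⟩
    · -- existence of periodic solution → S = 0
      rintro ⟨x, hxper, hxrec⟩
      have hterm : ∀ i : ℕ, (Ψ i)ᵀ *ᵥ h i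
          = (Ψ (i + 1))ᵀ *ᵥ (A *ᵥ x (i + 1)) - (Ψ i)ᵀ *ᵥ (A *ᵥ x i) := by
        intro i
        rw [← hxrec i, Matrix.mulVec_sub]
        congr 1
        rw [Matrix.mulVec_mulVec, hkey i]
      rw [hS]
      have hsub := Finset.sum_range_sub (fun i => (Ψ i)ᵀ *ᵥ (A *ᵥ x i)) N
      calc ∑ i ∈ Finset.range N, (Ψ i)ᵀ *ᵥ h i
          = ∑ i ∈ Finset.range N,
            ((Ψ (i + 1))ᵀ *ᵥ (A *ᵥ x (i + 1)) - (Ψ i)ᵀ *ᵥ (A *ᵥ x i)) :=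
            Finset.sum_congr rfl fun i _ => hterm i
        _ = (Ψ N)ᵀ *ᵥ (A *ᵥ x N) - (Ψ 0)ᵀ *ᵥ (A *ᵥ x 0) := hsub
        _ = 0 := by
            have h1 : Ψ N = Ψ 0 := by simpa using hΨper 0
            have h2 : x N = x 0 := by simpa using hxper 0
            rw [h1, h2, sub_self]
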